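/- arXiv:math/0702338 — 2 statements merged into one kernel-verified Lean document; each statement's English description precedes it below -/
import Mathlib

section
/- Assume the Mecke identity with Papangelou intensity r, condition (K0): c(x,y,γ) = 0 whenever r(x,γ) = 0 or r(y,γ) = 0, and condition (K1): for every Λ ∈ B₀(X), ∫_Γ ∑_{x∈γ} ∫_X c(x,y,γ\{x})(χ_Λ(x)+χ_Λ(y)) ν(dy) μ(dγ) < ∞. If F, G ∈ FC_b and F = 0 μ-almost everywhere, then ℰ_K(F,G) = 0, where ℰ_K(F,G) := ∫_Γ ∑_{x∈γ} ∫_X c(x,y,γ\{x}) (D_{xy}^{-+}F)(γ)(D_{xy}^{-+}G)(γ) ν(dy) μ(dγ). -/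
open MeasureTheory Set ENNReal Filter Topology

noncomputable section

/-- The configuration space over `X`: the set of all locally finite subsets of `X`. -/
def Config (X : Type*) [TopologicalSpace X] : Type _ :=
  {γ : Set X // ∀ K : Set X, IsCompact K → (γ ∩ K).Finite}

namespace Config

variable {X : Type*} [TopologicalSpace X]

/-- Removal of a point from a configuration, `γ \ {x}`. -/
def erase (γ : Config X) (x : X) : Config X :=
  ⟨γ.1 \ {x}, fun K hK => (γ.2 K hK).subset fun _ hz => ⟨hz.1.1, hz.2⟩⟩

/-- Insertion of a point into a configuration, `γ ∪ {x}`. -/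
def ins (γ : Config X) (x : X) : Config X :=
  ⟨insert x γ.1, fun K hK => ((γ.2 K hK).insert x).subset (by
    rintro z ⟨hz1, hz2⟩
    rcases Set.mem_insert_iff.mp hz1 with rfl | h
    · exact Set.mem_insert _ _
    · exact Set.mem_insert_of_mem _ ⟨h, hz2⟩)⟩

end Config

variable {X : Type*} [TopologicalSpace X]

/-- Cylinder functions `FC_b`: `F(γ) = g(⟨φ₁,γ⟩, …, ⟨φ_N,γ⟩)` with the `φᵢ` continuous
with compact support and `g` bounded continuous; here `⟨φ,γ⟩ = ∑_{x∈γ} φ(x)`. -/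
def IsCylinder (F : Config X → ℝ) : Prop :=
  ∃ (N : ℕ) (φ : Fin N → X → ℝ) (g : (Fin N → ℝ) → ℝ),
    (∀ i, Continuous (φ i)) ∧ (∀ i, HasCompactSupport (φ i)) ∧
      Continuous g ∧ (∃ C : ℝ, ∀ v, |g v| ≤ C) ∧
      ∀ γ : Config X, F γ = g fun i => ∑' x : γ.1, φ i x

/-- `(D_x^- F)(γ) = F(γ \ {x}) - F(γ)`. -/
def Dm (F : Config X → ℝ) (x : X) (γ : Config X) : ℝ := F (γ.erase x) - F γ

/-- `(D_x^+ F)(γ) = F(γ ∪ {x}) - F(γ)`. -/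
def Dp (F : Config X → ℝ) (x : X) (γ : Config X) : ℝ := F (γ.ins x) - F γ

/-- `(D_{xy}^{-+} F)(γ) = F((γ \ {x}) ∪ {y}) - F(γ)`. -/
def Dpm (F : Config X → ℝ) (x y : X) (γ : Config X) : ℝ := F ((γ.erase x).ins y) - F γ

variable [MeasurableSpace X]

/-- `Λ ∈ B₀(X)`: a relatively compact Borel set. -/
def IsB0 (Λ : Set X) : Prop := MeasurableSet Λ ∧ IsCompact (closure Λ)

/-- The σ-algebra on `Config X` generated by the counting maps `γ ↦ |γ ∩ Λ|`, `Λ ∈ B₀(X)`. -/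
instance : MeasurableSpace (Config X) :=
  ⨆ (Λ : Set X) (_ : IsB0 Λ),
    MeasurableSpace.comap (fun γ : Config X => (γ.1 ∩ Λ).ncard) ⊤

/-- The Mecke identity: `r` is a Papangelou intensity for `μ`, i.e.
`∫ ∑_{x∈γ} H(x,γ) μ(dγ) = ∫ ∫ r(x,γ) H(x,γ∪{x}) ν(dx) μ(dγ)` for measurable `H ≥ 0`. -/
def MeckeIdentity (ν : Measure X) (μ : Measure (Config X)) (r : X → Config X → ℝ) : Prop :=
  ∀ H : X → Config X → ℝ≥0∞, Measurable (fun p : X × Config X => H p.1 p.2) →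
    ∫⁻ γ, ∑' x : γ.1, H (x : X) γ ∂μ =
      ∫⁻ γ, ∫⁻ x, ENNReal.ofReal (r x γ) * H x (γ.ins x) ∂ν ∂μ

/-- Condition (G1): `∫ ∑_{x∈γ∩Λ} d(x,γ\{x}) μ(dγ) < ∞` for every `Λ ∈ B₀(X)`. -/
def CondG1 (μ : Measure (Config X)) (d : X → Config X → ℝ) : Prop :=
  ∀ Λ : Set X, IsB0 Λ →
    ∫⁻ γ, ∑' x : ↥(γ.1 ∩ Λ), ENNReal.ofReal (d (x : X) (γ.erase (x : X))) ∂μ < ⊤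

/-- Condition (K1): `∫ ∑_{x∈γ} ∫ c(x,y,γ\{x})(χ_Λ(x)+χ_Λ(y)) ν(dy) μ(dγ) < ∞`
for every `Λ ∈ B₀(X)`. -/
def CondK1 (ν : Measure X) (μ : Measure (Config X)) (c : X → X → Config X → ℝ) : Prop :=
  ∀ Λ : Set X, IsB0 Λ →
    ∫⁻ γ, ∑' x : γ.1, ∫⁻ y,
        ENNReal.ofReal (c (x : X) y (γ.erase (x : X))) *
          (Λ.indicator (1 : X → ℝ≥0∞) (x : X) + Λ.indicator (1 : X → ℝ≥0∞) y) ∂ν ∂μ < ⊤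

/-- The Glauber Dirichlet form `ℰ_G(F,G)`. -/
def glauberE (μ : Measure (Config X)) (d : X → Config X → ℝ) (F G : Config X → ℝ) : ℝ :=
  ∫ γ, (∑' x : γ.1, d (x : X) (γ.erase (x : X)) * Dm F (x : X) γ * Dm G (x : X) γ) ∂μ

/-- The Kawasaki Dirichlet form `ℰ_K(F,G)`. -/
def kawasakiE (ν : Measure X) (μ : Measure (Config X)) (c : X → X → Config X → ℝ)
    (F G : Config X → ℝ) : ℝ :=
  ∫ γ, (∑' x : γ.1, ∫ y, c (x : X) y (γ.erase (x : X)) * Dpm F (x : X) y γ *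
    Dpm G (x : X) y γ ∂ν) ∂μ

section AuxMeasurability

variable {X : Type*} [TopologicalSpace X] [MeasurableSpace X]

lemma Config.finite_inter {γ : Config X} {Λ : Set X} (h : IsB0 Λ) : (γ.1 ∩ Λ).Finite :=
  (γ.2 _ h.2).subset fun _ hz => ⟨hz.1, subset_closure hz.2⟩

lemma config_measurable_ncard {Λ : Set X} (h : IsB0 Λ) :
    Measurable fun γ : Config X => (γ.1 ∩ Λ).ncard := by
  rw [measurable_iff_comap_le]
  refine le_trans (MeasurableSpace.comap_mono le_top) ?_
  exact le_iSup₂ (f := fun Λ (_ : IsB0 Λ) =>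
    MeasurableSpace.comap (fun γ : Config X => (γ.1 ∩ Λ).ncard) ⊤) Λ h

lemma measurable_config_iff {α : Type*} [MeasurableSpace α] {f : α → Config X} :
    Measurable f ↔ ∀ Λ : Set X, IsB0 Λ → Measurable fun a => ((f a).1 ∩ Λ).ncard := by
  refine ⟨fun hf Λ h => (config_measurable_ncard h).comp hf, fun h => ?_⟩
  rw [measurable_iff_comap_le]
  have heq : MeasurableSpace.comap f (instMeasurableSpaceConfig : MeasurableSpace (Config X)) =
      ⨆ Λ : Set X, ⨆ _ : IsB0 Λ,
        MeasurableSpace.comap (fun a : α => ((f a).1 ∩ Λ).ncard) ⊤ := by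
    show MeasurableSpace.comap f (⨆ Λ, ⨆ _ : IsB0 Λ, MeasurableSpace.comap
      (fun γ : Config X => (γ.1 ∩ Λ).ncard) ⊤) = _
    simp only [MeasurableSpace.comap_iSup, MeasurableSpace.comap_comp]
    rfl
  rw [heq]
  refine iSup₂_le fun Λ hΛ => ?_
  have h2 := h Λ hΛ
  rw [measurable_iff_comap_le] at h2
  exact h2

end AuxMeasurability
section AuxTopology

variable {X : Type*} [TopologicalSpace X] [MeasurableSpace X]

lemma Config.isClosed' [T2Space X] [LocallyCompactSpace X] (γ : Config X) : IsClosed γ.1 := by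
  rw [← isOpen_compl_iff, isOpen_iff_mem_nhds]
  intro x hx
  obtain ⟨K, hKc, hKn⟩ := exists_compact_mem_nhds x
  have hfin : (γ.1 ∩ K).Finite := γ.2 K hKc
  have hcl : IsClosed (γ.1 ∩ K) := hfin.isClosed
  have hx' : x ∈ (γ.1 ∩ K)ᶜ := fun h => hx h.1
  refine Filter.mem_of_superset (Filter.inter_mem (hcl.isOpen_compl.mem_nhds hx') hKn) ?_
  rintro z ⟨hz1, hz2⟩ hzγ
  exact hz1 ⟨hzγ, hz2⟩

lemma Config.countable' [SigmaCompactSpace X] (γ : Config X) : γ.1.Countable := by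
  have h : γ.1 = ⋃ n, γ.1 ∩ compactCovering X n := by
    rw [← Set.inter_iUnion, iUnion_compactCovering, Set.inter_univ]
  rw [h]
  exact Set.countable_iUnion fun n => (γ.2 _ (isCompact_compactCovering X n)).countable

lemma measurableSet_mem_graph [T2Space X] [LocallyCompactSpace X] [SecondCountableTopology X]
    [OpensMeasurableSpace X] :
    MeasurableSet {p : X × Config X | p.1 ∈ p.2.1} := by
  classical
  set B : Set (Set X) := {V ∈ TopologicalSpace.countableBasis X | IsCompact (closure V)} with hB
  have hBc : B.Countable := (TopologicalSpace.countable_countableBasis X).mono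
    (Set.sep_subset _ _)
  have heq : {p : X × Config X | p.1 ∈ p.2.1} =
      ⋂ V ∈ B, {p : X × Config X | p.1 ∈ V → (p.2.1 ∩ V).Nonempty} := by
    ext ⟨x, γ⟩
    simp only [Set.mem_setOf_eq, Set.mem_iInter]
    constructor
    · exact fun hx V _ hxV => ⟨x, hx, hxV⟩
    · intro h
      by_contra hx
      obtain ⟨K, hKc, hKn⟩ := exists_compact_mem_nhds x
      have hop : IsOpen (γ.1ᶜ ∩ interior K) := γ.isClosed'.isOpen_compl.inter isOpen_interior
      have hxmem : x ∈ γ.1ᶜ ∩ interior K := ⟨hx, mem_interior_iff_mem_nhds.2 hKn⟩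
      obtain ⟨V, hVB, hxV, hVsub⟩ :=
        (TopologicalSpace.isBasis_countableBasis X).exists_subset_of_mem_open hxmem hop
      have hVK : IsCompact (closure V) := by
        refine hKc.of_isClosed_subset isClosed_closure ?_
        refine (closure_mono (hVsub.trans Set.inter_subset_right)).trans ?_
        exact closure_minimal interior_subset hKc.isClosed
      obtain ⟨z, hz1, hz2⟩ := h V ⟨hVB, hVK⟩ hxV
      exact (hVsub hz2).1 hz1
  rw [heq]
  refine MeasurableSet.biInter hBc fun V hV => ?_
  have hV0 : IsB0 V := ⟨(TopologicalSpace.isOpen_of_mem_countableBasis hV.1).measurableSet, hV.2⟩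
  have hset : {p : X × Config X | p.1 ∈ V → (p.2.1 ∩ V).Nonempty} =
      (V ×ˢ (Set.univ : Set (Config X)))ᶜ ∪
        (Set.univ : Set X) ×ˢ {γ : Config X | (γ.1 ∩ V).ncard ≠ 0} := by
    ext ⟨x, γ⟩
    have hfin : (γ.1 ∩ V).Finite := Config.finite_inter hV0
    simp only [Set.mem_setOf_eq, Set.mem_union, Set.mem_compl_iff, Set.mem_prod,
      Set.mem_univ, and_true, true_and, not_and]
    rw [Ne, Set.ncard_eq_zero hfin, ← Ne, ← Set.nonempty_iff_ne_empty]
    constructor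
    · intro h'
      by_cases hxV : x ∈ V
      · exact Or.inr (h' hxV)
      · exact Or.inl hxV
    · rintro (h' | h') hxV
      · exact absurd hxV h'
      · exact h'
  rw [hset]
  refine MeasurableSet.union ?_ ?_
  · exact (hV0.1.prod MeasurableSet.univ).compl
  · exact MeasurableSet.univ.prod
      ((config_measurable_ncard hV0 (measurableSet_singleton 0)).compl)

end AuxTopology
section AuxInsErase

variable {X : Type*} [TopologicalSpace X] [MeasurableSpace X]
variable [T2Space X] [LocallyCompactSpace X] [SecondCountableTopology X] [OpensMeasurableSpace X]

lemma measurable_config_ins : Measurable fun p : X × Config X => p.2.ins p.1 := by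
  rw [measurable_config_iff]
  intro Λ hΛ
  classical
  have hkey : (fun p : X × Config X => (((p.2.ins p.1).1 ∩ Λ).ncard)) = fun p =>
      (p.2.1 ∩ Λ).ncard + (if p.1 ∈ Λ ∧ p.1 ∉ p.2.1 then 1 else 0) := by
    funext p
    rcases p with ⟨x, γ⟩
    show ((insert x γ.1 ∩ Λ).ncard) = _
    by_cases h1 : x ∈ Λ
    · by_cases h2 : x ∈ γ.1
      · rw [Set.insert_eq_self.2 h2]
        simp [h1, h2]
      · rw [Set.insert_inter_of_mem h1,
          Set.ncard_insert_of_notMem (fun h => h2 h.1) (Config.finite_inter hΛ)]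
        simp [h1, h2]
    · rw [Set.insert_inter_of_notMem h1]
      simp [h1]
  rw [hkey]
  have hm1 : Measurable fun p : X × Config X => (p.2.1 ∩ Λ).ncard :=
    (config_measurable_ncard hΛ).comp measurable_snd
  have hS : MeasurableSet {p : X × Config X | p.1 ∈ Λ ∧ p.1 ∉ p.2.1} := by
    have : {p : X × Config X | p.1 ∈ Λ ∧ p.1 ∉ p.2.1} =
        (Λ ×ˢ (Set.univ : Set (Config X))) ∩ {p : X × Config X | p.1 ∈ p.2.1}ᶜ := by
      ext ⟨x, γ⟩; simp [Set.mem_prod]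
    rw [this]
    exact (hΛ.1.prod MeasurableSet.univ).inter measurableSet_mem_graph.compl
  have hm2 : Measurable fun p : X × Config X => (if p.1 ∈ Λ ∧ p.1 ∉ p.2.1 then 1 else 0 : ℕ) :=
    Measurable.ite hS measurable_const measurable_const
  exact (measurable_of_countable fun q : ℕ × ℕ => q.1 + q.2).comp (hm1.prodMk hm2)

lemma measurable_config_erase : Measurable fun p : X × Config X => p.2.erase p.1 := by
  rw [measurable_config_iff]
  intro Λ hΛ
  classical
  have hkey : (fun p : X × Config X => (((p.2.erase p.1).1 ∩ Λ).ncard)) = fun p =>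
      (p.2.1 ∩ Λ).ncard - (if p.1 ∈ Λ ∧ p.1 ∈ p.2.1 then 1 else 0) := by
    funext p
    rcases p with ⟨x, γ⟩
    show (((γ.1 \ {x}) ∩ Λ).ncard) = _
    have hdiff : (γ.1 \ {x}) ∩ Λ = (γ.1 ∩ Λ) \ {x} := by
      ext z; simp [Set.mem_diff]; tauto
    rw [hdiff]
    by_cases h1 : x ∈ Λ
    · by_cases h2 : x ∈ γ.1
      · rw [Set.ncard_diff_singleton_of_mem (Set.mem_inter h2 h1)]
        simp [h1, h2]
      · rw [Set.diff_singleton_eq_self (fun h => h2 h.1)]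
        simp [h1, h2]
    · rw [Set.diff_singleton_eq_self (fun h => h1 h.2)]
      simp [h1]
  rw [hkey]
  have hm1 : Measurable fun p : X × Config X => (p.2.1 ∩ Λ).ncard :=
    (config_measurable_ncard hΛ).comp measurable_snd
  have hS : MeasurableSet {p : X × Config X | p.1 ∈ Λ ∧ p.1 ∈ p.2.1} := by
    have : {p : X × Config X | p.1 ∈ Λ ∧ p.1 ∈ p.2.1} =
        (Λ ×ˢ (Set.univ : Set (Config X))) ∩ {p : X × Config X | p.1 ∈ p.2.1} := by
      ext ⟨x, γ⟩; simp [Set.mem_prod]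
    rw [this]
    exact (hΛ.1.prod MeasurableSet.univ).inter measurableSet_mem_graph
  have hm2 : Measurable fun p : X × Config X => (if p.1 ∈ Λ ∧ p.1 ∈ p.2.1 then 1 else 0 : ℕ) :=
    Measurable.ite hS measurable_const measurable_const
  exact (measurable_of_countable fun q : ℕ × ℕ => q.1 - q.2).comp (hm1.prodMk hm2)

end AuxInsErase
section AuxPointMeasure

variable {X : Type*} [TopologicalSpace X] [MeasurableSpace X]

/-- The counting measure `∑_{x ∈ γ} δ_x` associated to a configuration. -/
def Config.pm (γ : Config X) : Measure X := Measure.sum fun x : γ.1 => Measure.dirac (x : X)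

lemma Config.pm_apply (γ : Config X) {A : Set X} (hA : MeasurableSet A) :
    γ.pm A = ∑' x : γ.1, A.indicator (1 : X → ℝ≥0∞) (x : X) := by
  rw [Config.pm, Measure.sum_apply _ hA]
  refine tsum_congr fun x => ?_
  rw [Measure.dirac_apply' _ hA]

lemma Config.lintegral_pm (γ : Config X) {f : X → ℝ≥0∞} (hf : Measurable f) :
    ∫⁻ x, f x ∂γ.pm = ∑' x : γ.1, f (x : X) := by
  rw [Config.pm, lintegral_sum_measure]
  exact tsum_congr fun x => lintegral_dirac' _ hf

lemma Config.pm_b0 (γ : Config X) {Λ : Set X} (h : IsB0 Λ) :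
    γ.pm Λ = ((γ.1 ∩ Λ).ncard : ℝ≥0∞) := by
  classical
  rw [Config.pm_apply γ h.1, tsum_subtype, Set.indicator_indicator, ← tsum_subtype]
  have hfin : (γ.1 ∩ Λ).Finite := Config.finite_inter h
  have : Fintype ↥(γ.1 ∩ Λ) := hfin.fintype
  rw [tsum_fintype]
  simp only [Pi.one_apply, Finset.sum_const, Finset.card_univ, nsmul_eq_mul, mul_one]
  congr 1
  rw [← Nat.card_coe_set_eq, Nat.card_eq_fintype_card]

lemma Config.pm_b0_lt_top (γ : Config X) {Λ : Set X} (h : IsB0 Λ) : γ.pm Λ < ⊤ := by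
  rw [Config.pm_b0 γ h]; exact ENNReal.natCast_lt_top _

lemma measurable_pm_b0 {Λ : Set X} (h : IsB0 Λ) :
    Measurable fun γ : Config X => γ.pm Λ := by
  simp only [Config.pm_b0 _ h]
  exact (measurable_of_countable (Nat.cast : ℕ → ℝ≥0∞)).comp (config_measurable_ncard h)

lemma measurable_pm_section_inter {T : Set X} (hT : IsB0 T) {S : Set (X × Config X)}
    (hS : MeasurableSet S) :
    Measurable fun γ : Config X => γ.pm ({x | (x, γ) ∈ S} ∩ T) := by
  have hsec : ∀ (t : Set (X × Config X)), MeasurableSet t → ∀ γ : Config X,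
      MeasurableSet {x | (x, γ) ∈ t} := fun t ht γ => measurable_prodMk_right ht
  revert hS
  refine fun hS => MeasurableSpace.induction_on_inter
    (C := fun (S : Set (X × Config X)) _ => Measurable fun γ : Config X =>
      γ.pm ({x | (x, γ) ∈ S} ∩ T))
    generateFrom_prod.symm isPiSystem_prod ?empty ?basic ?compl ?iUnion S hS
  case empty => simp only [Set.mem_empty_iff_false, Set.setOf_false, Set.empty_inter,
      measure_empty]; exact measurable_const
  case basic =>
    intro t ht
    obtain ⟨A, hA, B, hB, rfl⟩ := ht
    simp only [Set.mem_setOf_eq] at hA hB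
    have hAT : IsB0 (A ∩ T) := ⟨hA.inter hT.1,
      hT.2.of_isClosed_subset isClosed_closure (closure_mono Set.inter_subset_right)⟩
    have hfun : (fun γ : Config X => γ.pm ({x | (x, γ) ∈ A ×ˢ B} ∩ T)) =
        fun γ => B.indicator (fun γ' : Config X => γ'.pm (A ∩ T)) γ := by
      funext γ
      by_cases hγ : γ ∈ B
      · have : {x | (x, γ) ∈ A ×ˢ B} = A := by ext x; simp [hγ]
        rw [this, Set.indicator_of_mem hγ]
      · have : {x | (x, γ) ∈ A ×ˢ B} = ∅ := by ext x; simp [hγ]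
        rw [this, Set.indicator_of_notMem hγ]
        simp
    rw [hfun]
    exact (measurable_pm_b0 hAT).indicator hB
  case compl =>
    intro t ht iht
    have hfun : (fun γ : Config X => γ.pm ({x | (x, γ) ∈ tᶜ} ∩ T)) =
        fun γ => γ.pm T - γ.pm ({x | (x, γ) ∈ t} ∩ T) := by
      funext γ
      have heq : {x | (x, γ) ∈ tᶜ} ∩ T = T \ ({x | (x, γ) ∈ t} ∩ T) := by
        ext x; simp only [Set.mem_inter_iff, Set.mem_setOf_eq, Set.mem_compl_iff,
          Set.mem_diff, not_and]; tauto
      rw [heq, measure_diff Set.inter_subset_right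
        (((hsec t ht γ).inter hT.1).nullMeasurableSet)
        (((measure_mono Set.inter_subset_right).trans_lt (γ.pm_b0_lt_top hT)).ne)]
    rw [hfun]
    exact (measurable_pm_b0 hT).sub iht
  case iUnion =>
    intro f hdisj hfm ihf
    have hfun : (fun γ : Config X => γ.pm ({x | (x, γ) ∈ ⋃ i, f i} ∩ T)) =
        fun γ => ∑' i, γ.pm ({x | (x, γ) ∈ f i} ∩ T) := by
      funext γ
      have heq : {x | (x, γ) ∈ ⋃ i, f i} ∩ T = ⋃ i, ({x | (x, γ) ∈ f i} ∩ T) := by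
        ext x; simp [Set.mem_iUnion, and_comm]
      rw [heq, measure_iUnion]
      · intro i j hij
        refine Set.disjoint_left.2 fun x hxi hxj => ?_
        exact Set.disjoint_left.1 (hdisj hij) hxi.1 hxj.1
      · exact fun i => (hsec _ (hfm i) γ).inter hT.1
    rw [hfun]
    exact Measurable.ennreal_tsum fun i => ihf i

lemma measurable_pm_section [T2Space X] [LocallyCompactSpace X] [SecondCountableTopology X]
    [OpensMeasurableSpace X] {S : Set (X × Config X)} (hS : MeasurableSet S) :
    Measurable fun γ : Config X => γ.pm {x | (x, γ) ∈ S} := by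
  have hcov : ∀ γ : Config X, γ.pm {x | (x, γ) ∈ S} =
      ⨆ n, γ.pm ({x | (x, γ) ∈ S} ∩ compactCovering X n) := by
    intro γ
    have h1 : {x | (x, γ) ∈ S} = ⋃ n, ({x | (x, γ) ∈ S} ∩ compactCovering X n) := by
      rw [← Set.inter_iUnion, iUnion_compactCovering, Set.inter_univ]
    conv_lhs => rw [h1]
    refine Directed.measure_iUnion ?_
    exact (Monotone.directed_le fun m n hmn =>
      Set.inter_subset_inter_right _ (compactCovering_subset X hmn))
  simp only [hcov]
  refine Measurable.iSup fun n => ?_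
  have hK : IsB0 (compactCovering X n) := by
    have hc := isCompact_compactCovering X n
    exact ⟨hc.isClosed.measurableSet, by rw [hc.isClosed.closure_eq]; exact hc⟩
  exact measurable_pm_section_inter hK hS

lemma measurable_tsum_config [T2Space X] [LocallyCompactSpace X] [SecondCountableTopology X]
    [OpensMeasurableSpace X] {f : X × Config X → ℝ≥0∞} (hf : Measurable f) :
    Measurable fun γ : Config X => ∑' x : γ.1, f ((x : X), γ) := by
  have h1 : ∀ γ : Config X, ∑' x : γ.1, f ((x : X), γ) = ∫⁻ x, f (x, γ) ∂γ.pm :=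
    fun γ => (γ.lintegral_pm (hf.comp measurable_prodMk_right)).symm
  simp only [h1]
  have hsimple : ∀ ψ : SimpleFunc (X × Config X) ℝ≥0∞,
      Measurable fun γ : Config X => ∫⁻ x, ψ (x, γ) ∂γ.pm := by
    intro ψ
    induction ψ using SimpleFunc.induction with
    | const c hs =>
      rename_i s
      have heq : ∀ γ : Config X,
          (∫⁻ x, (SimpleFunc.piecewise s hs (SimpleFunc.const _ c)
            (SimpleFunc.const _ 0)) (x, γ) ∂γ.pm) = c * γ.pm {x | (x, γ) ∈ s} := by
        intro γ
        have hfn : (fun x => (SimpleFunc.piecewise s hs (SimpleFunc.const _ c)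
            (SimpleFunc.const _ 0)) (x, γ)) =
            {x | (x, γ) ∈ s}.indicator fun _ => c := by
          funext x
          simp only [SimpleFunc.coe_piecewise, SimpleFunc.coe_const, Set.piecewise,
            Set.indicator, Set.mem_setOf_eq]
          rfl
        rw [hfn]
        exact lintegral_indicator_const (s := {x | (x, γ) ∈ s}) (measurable_prodMk_right hs) c
      simp only [heq]
      exact (measurable_pm_section hs).const_mul c
    | @add ψ ξ hdisj hψ hξ =>
      have heq : ∀ γ : Config X, (∫⁻ x, (ψ + ξ) (x, γ) ∂γ.pm) =
          (∫⁻ x, ψ (x, γ) ∂γ.pm) + ∫⁻ x, ξ (x, γ) ∂γ.pm := by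
        intro γ
        simp only [SimpleFunc.coe_add, Pi.add_apply]
        exact lintegral_add_left (ψ.measurable.comp measurable_prodMk_right) _
      simp only [heq]
      exact hψ.add hξ
  have h2 : ∀ γ : Config X, ∫⁻ x, f (x, γ) ∂γ.pm =
      ⨆ n, ∫⁻ x, (SimpleFunc.eapprox f n) (x, γ) ∂γ.pm := by
    intro γ
    rw [← lintegral_iSup (f := fun n => fun x => (SimpleFunc.eapprox f n) (x, γ))
      (fun n => (SimpleFunc.eapprox f n).measurable.comp measurable_prodMk_right)
      (fun i j hij x => SimpleFunc.monotone_eapprox f hij _)]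
    refine lintegral_congr fun x => ?_
    exact (SimpleFunc.iSup_eapprox_apply hf _).symm
  simp only [h2]
  exact Measurable.iSup fun n => hsimple _

end AuxPointMeasure
section AuxCylinder

variable {X : Type*} [TopologicalSpace X] [MeasurableSpace X]
variable [T2Space X] [LocallyCompactSpace X] [SecondCountableTopology X] [OpensMeasurableSpace X]

lemma measurable_tsum_real {φ : X → ℝ} (hc : Continuous φ) (hs : HasCompactSupport φ) :
    Measurable fun γ : Config X => ∑' x : γ.1, φ (x : X) := by
  classical
  have key : ∀ γ : Config X, ∑' x : γ.1, φ (x : X) =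
      (∑' x : γ.1, ENNReal.ofReal (φ (x : X))).toReal -
        (∑' x : γ.1, ENNReal.ofReal (-φ (x : X))).toReal := by
    intro γ
    have hfin : {x : ↥γ.1 | φ (x : X) ≠ 0}.Finite := by
      have h1 : (γ.1 ∩ tsupport φ).Finite := γ.2 _ hs
      exact (h1.preimage (Set.injOn_of_injective Subtype.coe_injective)).subset
        fun x hx => ⟨x.2, subset_tsupport φ hx⟩
    set s : Finset ↥γ.1 := hfin.toFinset with hsdef
    have hmem : ∀ b : ↥γ.1, b ∉ s → φ (b : X) = 0 := by
      intro b hb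
      by_contra hb'
      exact hb (hfin.mem_toFinset.2 hb')
    rw [tsum_eq_sum (s := s) (fun b hb => hmem b hb),
      tsum_eq_sum (s := s) (fun b hb => by rw [hmem b hb]; simp),
      tsum_eq_sum (s := s) (fun b hb => by rw [hmem b hb]; simp),
      ENNReal.toReal_sum (fun a _ => ENNReal.ofReal_ne_top),
      ENNReal.toReal_sum (fun a _ => ENNReal.ofReal_ne_top),
      ← Finset.sum_sub_distrib]
    refine (Finset.sum_congr rfl fun x _ => ?_).symm
    rw [ENNReal.toReal_ofReal', ENNReal.toReal_ofReal']
    exact max_zero_sub_max_neg_zero_eq_self _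
  simp only [key]
  have hm1 : Measurable fun p : X × Config X => ENNReal.ofReal (φ p.1) :=
    ENNReal.measurable_ofReal.comp (hc.measurable.comp measurable_fst)
  have hm2 : Measurable fun p : X × Config X => ENNReal.ofReal (-φ p.1) :=
    ENNReal.measurable_ofReal.comp ((hc.neg.measurable).comp measurable_fst)
  exact ((measurable_tsum_config hm1).ennreal_toReal).sub
    ((measurable_tsum_config hm2).ennreal_toReal)

lemma IsCylinder.measurable {F : Config X → ℝ} (hF : IsCylinder F) : Measurable F := by
  obtain ⟨N, φ, g, hφc, hφs, hgc, -, hFeq⟩ := hF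
  have hfe : F = fun γ => g fun i => ∑' x : γ.1, φ i (x : X) := funext hFeq
  rw [hfe]
  exact hgc.measurable.comp
    (measurable_pi_lambda _ fun i => measurable_tsum_real (hφc i) (hφs i))

end AuxCylinder
/-- Under the Mecke identity and conditions (K0) and (K1), if `F, G ∈ FC_b` and `F = 0`
μ-a.e., then `ℰ_K(F,G) = 0`. -/
theorem kawasaki_form_well_defined {X : Type*} [TopologicalSpace X]
    [LocallyCompactSpace X] [SecondCountableTopology X] [T2Space X]
    [MeasurableSpace X] [BorelSpace X]
    (ν : Measure X) [ν.Regular] [NullSingletonClass ν]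
    (μ : Measure (Config X)) [IsProbabilityMeasure μ]
    (r : X → Config X → ℝ) (hr0 : ∀ x γ, 0 ≤ r x γ)
    (hrm : Measurable fun p : X × Config X => r p.1 p.2)
    (hMecke : MeckeIdentity ν μ r)
    (c : X → X → Config X → ℝ) (hc0 : ∀ x y γ, 0 ≤ c x y γ)
    (hcm : Measurable fun p : X × X × Config X => c p.1 p.2.1 p.2.2)
    (hK0 : ∀ x y γ, r x γ = 0 ∨ r y γ = 0 → c x y γ = 0)
    (hK1 : CondK1 ν μ c)
    (F G : Config X → ℝ) (hF : IsCylinder F) (hG : IsCylinder G)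
    (hF0 : ∀ᵐ γ ∂μ, F γ = 0) :
    kawasakiE ν μ c F G = 0 := by
  classical
  have hFm : Measurable F := hF.measurable
  have hins : Measurable fun p : X × Config X => p.2.ins p.1 := measurable_config_ins
  have herase : Measurable fun p : X × Config X => p.2.erase p.1 := measurable_config_erase
  set NZ : Set (Config X) := {γ' | F γ' ≠ 0} with hNZ
  have hNZm : MeasurableSet NZ := (hFm (measurableSet_singleton 0)).compl
  -- Step A: a.e. γ, a.e. y, r y γ = 0 or F (γ ∪ {y}) = 0
  have stepA : ∀ n : ℕ, ∀ᵐ γ ∂μ,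
      ∫⁻ y, ENNReal.ofReal (r y γ) * ((compactCovering X n).indicator 1 y *
        NZ.indicator 1 (γ.ins y)) ∂ν = 0 := by
    intro n
    set H1 : X → Config X → ℝ≥0∞ := fun y γ =>
      (compactCovering X n).indicator 1 y * NZ.indicator 1 γ with hH1
    have hKn : MeasurableSet (compactCovering X n) :=
      (isCompact_compactCovering X n).isClosed.measurableSet
    have hH1m : Measurable fun p : X × Config X => H1 p.1 p.2 :=
      ((measurable_one.indicator hKn).comp measurable_fst).mul
        ((measurable_one.indicator hNZm).comp measurable_snd)
    have hM := hMecke H1 hH1m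
    have hLHS : ∫⁻ γ, ∑' x : γ.1, H1 (x : X) γ ∂μ = 0 := by
      have h0 : ∀ᵐ γ ∂μ, (∑' x : γ.1, H1 (x : X) γ) = 0 := by
        filter_upwards [hF0] with γ hγ
        have hni : NZ.indicator (1 : Config X → ℝ≥0∞) γ = 0 :=
          Set.indicator_of_notMem (by simp [hNZ, hγ]) _
        simp [hH1, hni]
      rw [lintegral_congr_ae h0, lintegral_zero]
    have hRHS : ∫⁻ γ, ∫⁻ y, ENNReal.ofReal (r y γ) * H1 y (γ.ins y) ∂ν ∂μ = 0 := by
      rw [← hM]; exact hLHS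
    have hout : Measurable fun γ : Config X =>
        ∫⁻ y, ENNReal.ofReal (r y γ) * H1 y (γ.ins y) ∂ν := by
      refine Measurable.lintegral_prod_right' (f := fun q : Config X × X =>
        ENNReal.ofReal (r q.2 q.1) * H1 q.2 (q.1.ins q.2)) ?_
      refine Measurable.mul ?_ (Measurable.mul ?_ ?_)
      · exact ENNReal.measurable_ofReal.comp (hrm.comp measurable_swap)
      · exact (measurable_one.indicator hKn).comp measurable_snd
      · exact (measurable_one.indicator hNZm).comp (hins.comp measurable_swap)
    exact (lintegral_eq_zero_iff hout).1 hRHS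
  have hA : ∀ᵐ γ ∂μ, ∀ᵐ y ∂ν, r y γ = 0 ∨ F (γ.ins y) = 0 := by
    have hall : ∀ᵐ γ ∂μ, ∀ n : ℕ,
        ∫⁻ y, ENNReal.ofReal (r y γ) * ((compactCovering X n).indicator 1 y *
          NZ.indicator 1 (γ.ins y)) ∂ν = 0 := ae_all_iff.2 stepA
    filter_upwards [hall] with γ hγ
    have hyn : ∀ n : ℕ, ∀ᵐ y ∂ν, ENNReal.ofReal (r y γ) *
        ((compactCovering X n).indicator 1 y * NZ.indicator 1 (γ.ins y)) = 0 := by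
      intro n
      have hKn : MeasurableSet (compactCovering X n) :=
        (isCompact_compactCovering X n).isClosed.measurableSet
      refine (lintegral_eq_zero_iff ?_).1 (hγ n)
      refine Measurable.mul ?_ (Measurable.mul ?_ ?_)
      · exact ENNReal.measurable_ofReal.comp (hrm.comp measurable_prodMk_right)
      · exact measurable_one.indicator hKn
      · exact (measurable_one.indicator hNZm).comp (hins.comp measurable_prodMk_right)
    have hya : ∀ᵐ y ∂ν, ∀ n : ℕ, ENNReal.ofReal (r y γ) *
        ((compactCovering X n).indicator 1 y * NZ.indicator 1 (γ.ins y)) = 0 :=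
      ae_all_iff.2 hyn
    filter_upwards [hya] with y hy
    obtain ⟨n, hn⟩ := exists_mem_compactCovering y
    have h := hy n
    rw [Set.indicator_of_mem hn] at h
    simp only [Pi.one_apply, one_mul] at h
    rcases mul_eq_zero.1 h with h' | h'
    · exact Or.inl (le_antisymm (ENNReal.ofReal_eq_zero.1 h') (hr0 y γ))
    · refine Or.inr ?_
      by_contra hFne
      rw [Set.indicator_of_mem (show γ.ins y ∈ NZ from hFne)] at h'
      simp at h'
  -- Step B
  set E : Set (X × X × Config X) :=
    {q | c q.1 q.2.1 q.2.2 ≠ 0 ∧ F (q.2.2.ins q.2.1) ≠ 0} with hE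
  have hEm : MeasurableSet E := by
    have h1 : MeasurableSet {q : X × X × Config X | c q.1 q.2.1 q.2.2 ≠ 0} :=
      (hcm (measurableSet_singleton 0)).compl
    have h2 : MeasurableSet {q : X × X × Config X | F (q.2.2.ins q.2.1) ≠ 0} := by
      have hm : Measurable fun q : X × X × Config X => F (q.2.2.ins q.2.1) :=
        hFm.comp (hins.comp measurable_snd)
      exact (hm (measurableSet_singleton 0)).compl
    exact h1.inter h2
  set H2 : X → Config X → ℝ≥0∞ := fun x γ =>
    ∫⁻ y, E.indicator 1 (x, y, γ.erase x) ∂ν with hH2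
  have hH2m : Measurable fun p : X × Config X => H2 p.1 p.2 := by
    refine Measurable.lintegral_prod_right'
      (f := fun q : (X × Config X) × X => E.indicator 1 (q.1.1, q.2, q.1.2.erase q.1.1)) ?_
    refine (measurable_one.indicator hEm).comp ?_
    exact (measurable_fst.comp measurable_fst).prodMk
      (measurable_snd.prodMk (herase.comp measurable_fst))
  have hM2 := hMecke H2 hH2m
  have hgood : ∀ᵐ γ ∂μ, ∫⁻ x, ENNReal.ofReal (r x γ) * H2 x (γ.ins x) ∂ν = 0 := by
    filter_upwards [hA] with γ hγ
    have hae_x : ∀ᵐ x ∂ν, x ∉ γ.1 := by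
      have h0 : ν γ.1 = 0 := (γ.countable').measure_zero ν
      rw [ae_iff]
      simpa using h0
    have hzero : ∀ᵐ x ∂ν, ENNReal.ofReal (r x γ) * H2 x (γ.ins x) = 0 := by
      filter_upwards [hae_x] with x hx
      have her : (γ.ins x).erase x = γ := by
        apply Subtype.ext
        show (insert x γ.1) \ {x} = γ.1
        rw [Set.insert_diff_of_mem _ (Set.mem_singleton x), Set.diff_singleton_eq_self hx]
      have hH2x : H2 x (γ.ins x) = 0 := by
        have hin : ∀ᵐ y ∂ν, E.indicator (1 : X × X × Config X → ℝ≥0∞)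
            (x, y, (γ.ins x).erase x) = 0 := by
          filter_upwards [hγ] with y hy
          rw [her]
          refine Set.indicator_of_notMem ?_ _
          rintro ⟨hc1, hc2⟩
          rcases hy with h' | h'
          · exact hc1 (hK0 x y γ (Or.inr h'))
          · exact hc2 h'
        calc H2 x (γ.ins x) = ∫⁻ y, E.indicator 1 (x, y, (γ.ins x).erase x) ∂ν := rfl
          _ = ∫⁻ _, (0 : ℝ≥0∞) ∂ν := lintegral_congr_ae hin
          _ = 0 := lintegral_zero
      rw [hH2x, mul_zero]
    rw [lintegral_congr_ae hzero, lintegral_zero]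
  have hQ : ∫⁻ γ, ∑' x : γ.1, H2 (x : X) γ ∂μ = 0 := by
    rw [hM2, lintegral_congr_ae hgood, lintegral_zero]
  have hTm : Measurable fun γ : Config X => ∑' x : γ.1, H2 (x : X) γ :=
    measurable_tsum_config hH2m
  have hae2 : ∀ᵐ γ ∂μ, (∑' x : γ.1, H2 (x : X) γ) = 0 := (lintegral_eq_zero_iff hTm).1 hQ
  -- Conclusion
  rw [kawasakiE]
  refine integral_eq_zero_of_ae ?_
  filter_upwards [hF0, hae2] with γ hγ0 hγT
  have hterm : ∀ x : ↥γ.1, (∫ y, c (x : X) y (γ.erase (x : X)) * Dpm F (x : X) y γ *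
      Dpm G (x : X) y γ ∂ν) = 0 := by
    intro x
    have hx0 : H2 (x : X) γ = 0 :=
      le_antisymm ((ENNReal.le_tsum x).trans hγT.le) (zero_le)
    have hmy : Measurable fun y : X => E.indicator (1 : X × X × Config X → ℝ≥0∞)
        ((x : X), y, γ.erase (x : X)) :=
      (measurable_one.indicator hEm).comp
        (measurable_const.prodMk (measurable_id.prodMk measurable_const))
    have hy0 : ∀ᵐ y ∂ν, E.indicator (1 : X × X × Config X → ℝ≥0∞)
        ((x : X), y, γ.erase (x : X)) = 0 := (lintegral_eq_zero_iff hmy).1 hx0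
    refine integral_eq_zero_of_ae ?_
    filter_upwards [hy0] with y hy
    have hnE : ((x : X), y, γ.erase (x : X)) ∉ E := by
      intro hmem
      rw [Set.indicator_of_mem hmem] at hy
      simp at hy
    by_cases hc' : c (x : X) y (γ.erase (x : X)) = 0
    · simp [hc']
    · have hF' : F ((γ.erase (x : X)).ins y) = 0 := by
        by_contra h'
        exact hnE ⟨hc', h'⟩
      show c (x : X) y (γ.erase (x : X)) * Dpm F (x : X) y γ * Dpm G (x : X) y γ = (0 : ℝ)
      simp [Dpm, hF', hγ0]
  calc (∑' x : γ.1, ∫ y, c (x : X) y (γ.erase (x : X)) * Dpm F (x : X) y γ *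
        Dpm G (x : X) y γ ∂ν) = ∑' _ : γ.1, (0 : ℝ) := tsum_congr hterm
    _ = 0 := tsum_zero

end
end

section
/- (Proposition 3.3, case s = 1.) Assume the Mecke identity with Papangelou intensity r, and assume: a : X×X → [0,∞) is measurable, symmetric (a(x,y) = a(y,x)), bounded, with sup_{x∈X} ∫_X a(x,y) ν(dy) < ∞; j : X → [0,∞) is measurable with r(x,γ) ≤ j(x) for all x ∈ X and γ ∈ Γ, with ∫_Λ j dν < ∞ for every Λ ∈ B₀(X), and sup_{x ∈ X\Λ₀} j(x) < ∞ for some Λ₀ ∈ B₀(X). Define c₁(x,y,γ) := a(x,y)·r(y,γ)·𝟙{r(x,γ)>0 and r(y,γ)>0}. Then for every Λ ∈ B₀(X) the function γ ↦ ∑_{x∈γ} ∫_X c₁(x,y,γ\{x})·(χ_Λ(x)+χ_Λ(y)) ν(dy) is square-integrable with respect to μ. -/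
open MeasureTheory Set ENNReal Filter Topology

noncomputable section

variable {X : Type*} [TopologicalSpace X]

variable [MeasurableSpace X]

section Aux

lemma measurable_count (Λ : Set X) (hΛ : IsB0 Λ) :
    Measurable (fun γ : Config X => ((γ.1 ∩ Λ).ncard : ℝ≥0∞)) := by
  have h1 : Measurable (fun γ : Config X => (γ.1 ∩ Λ).ncard) := by
    rw [measurable_iff_comap_le]
    exact le_iSup₂ (f := fun (Λ : Set X) (_ : IsB0 Λ) =>
      MeasurableSpace.comap (fun γ : Config X => (γ.1 ∩ Λ).ncard) ⊤) Λ hΛ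
  exact (measurable_from_top (f := fun n : ℕ => (n : ℝ≥0∞))).comp h1

lemma tsum_set_indicator_ncard {t : Set X} (ht : t.Finite) :
    ∑' z : X, t.indicator (1 : X → ℝ≥0∞) z = (t.ncard : ℝ≥0∞) := by
  rw [← tsum_subtype]
  haveI := ht.fintype
  rw [tsum_fintype]
  simp only [Pi.one_apply, Finset.sum_const, Finset.card_univ, nsmul_eq_mul, mul_one]
  rw [← Nat.card_coe_set_eq, Nat.card_eq_fintype_card]

lemma tsum_indicator_eq_ncard [T2Space X] (γ : Config X) (Λ : Set X) (hΛ : IsB0 Λ) :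
    ∑' z : γ.1, Λ.indicator (1 : X → ℝ≥0∞) z = ((γ.1 ∩ Λ).ncard : ℝ≥0∞) := by
  have hfin : (γ.1 ∩ Λ).Finite :=
    (γ.2 (closure Λ) hΛ.2).subset fun z hz => ⟨hz.1, subset_closure hz.2⟩
  rw [tsum_subtype, Set.indicator_indicator, tsum_set_indicator_ncard hfin]

lemma tsum_iSup_swap {α : Type*} [MeasurableSpace α] [MeasurableSingletonClass α]
    (f : ℕ → α → ℝ≥0∞) (hf : ∀ n, Measurable (f n)) (hm : Monotone f) :
    ∑' z : α, ⨆ n, f n z = ⨆ n, ∑' z : α, f n z := by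
  simp_rw [← MeasureTheory.lintegral_count]
  exact lintegral_iSup hf hm

end Aux

section LinStat
variable [T2Space X] [LocallyCompactSpace X] [SecondCountableTopology X] [BorelSpace X]

lemma measurable_N {s : Set X} (hs : MeasurableSet s) :
    Measurable (fun γ : Config X => ∑' z : γ.1, s.indicator (1 : X → ℝ≥0∞) z) := by
  set K := compactCovering X with hK
  have hB0 : ∀ n, IsB0 (s ∩ K n) := by
    intro n
    refine ⟨hs.inter (isCompact_compactCovering X n).isClosed.measurableSet, ?_⟩
    exact (isCompact_compactCovering X n).of_isClosed_subset isClosed_closure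
      (closure_minimal inter_subset_right (isCompact_compactCovering X n).isClosed)
  have key : ∀ γ : Config X, (∑' z : γ.1, s.indicator (1 : X → ℝ≥0∞) z)
      = ⨆ n, ∑' z : γ.1, (s ∩ K n).indicator (1 : X → ℝ≥0∞) z := by
    intro γ
    rw [← tsum_iSup_swap (fun n (z : γ.1) => (s ∩ K n).indicator (1 : X → ℝ≥0∞) z)
      (fun n => ((measurable_one.indicator (hB0 n).1)).comp measurable_subtype_coe)
      (fun m n hmn z => by
        apply Set.indicator_le_indicator_of_subset
          (Set.inter_subset_inter_right s (compactCovering_subset X hmn))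
        intro x; exact zero_le)]
    congr 1
    funext z
    by_cases hz : (z : X) ∈ s
    · obtain ⟨n, hn⟩ := exists_mem_compactCovering (z : X)
      refine le_antisymm ?_ ?_
      · have hmem : (z : X) ∈ s ∩ K n := ⟨hz, hn⟩
        rw [Set.indicator_of_mem hz]
        have : (1 : X → ℝ≥0∞) (z : X) = (s ∩ K n).indicator (1 : X → ℝ≥0∞) (z : X) :=
          (Set.indicator_of_mem hmem _).symm
        exact le_trans (le_of_eq this) (le_iSup (fun m => (s ∩ K m).indicator (1 : X → ℝ≥0∞) (z : X)) n)
      · exact iSup_le fun m => Set.indicator_le_indicator_of_subset inter_subset_left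
          (fun x => zero_le) _
    · rw [Set.indicator_of_notMem hz]
      have : ∀ n, (s ∩ K n).indicator (1 : X → ℝ≥0∞) (z : X) = 0 := fun n =>
        Set.indicator_of_notMem (fun h => hz h.1) _
      simp only [this, iSup_const]
  simp_rw [key]
  refine Measurable.iSup fun n => ?_
  have := fun γ : Config X => tsum_indicator_eq_ncard γ (s ∩ K n) (hB0 n)
  simp_rw [this]
  exact measurable_count _ (hB0 n)

lemma measurable_linstat {h : X → ℝ≥0∞} (hh : Measurable h) :
    Measurable (fun γ : Config X => ∑' z : γ.1, h z) := by
  refine Measurable.ennreal_induction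
    (motive := fun h => Measurable fun γ : Config X => ∑' z : γ.1, h z) ?_ ?_ ?_ hh
  · intro c s hs
    have : ∀ γ : Config X, (∑' z : γ.1, s.indicator (fun _ => c) z)
        = c * ∑' z : γ.1, s.indicator (1 : X → ℝ≥0∞) z := by
      intro γ
      rw [← ENNReal.tsum_mul_left]
      congr 1; funext z
      by_cases hz : (z : X) ∈ s <;> simp [hz]
    simp_rw [this]
    exact (measurable_N hs).const_mul c
  · intro f g hfg hf hg Pf Pg
    simp_rw [Pi.add_apply, ENNReal.tsum_add]
    exact Pf.add Pg
  · intro f hf hmono Pf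
    have : ∀ γ : Config X, (∑' z : γ.1, ⨆ n, f n z) = ⨆ n, ∑' z : γ.1, f n z := fun γ =>
      tsum_iSup_swap _ (fun n => (hf n).comp measurable_subtype_coe)
        (fun m n hmn z => hmono hmn (z : X))
    simp_rw [this]
    exact Measurable.iSup Pf

end LinStat

/-- Proposition 3.3, case `s = 1`: for the rate
`c₁(x,y,γ) = a(x,y)·r(y,γ)·𝟙{r(x,γ)>0 ∧ r(y,γ)>0}`, the function
`γ ↦ ∑_{x∈γ} ∫ c₁(x,y,γ\{x})(χ_Λ(x)+χ_Λ(y)) ν(dy)` is square-integrable with respect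
to `μ` for every `Λ ∈ B₀(X)`. -/
theorem example_rate_square_integrable {X : Type*} [TopologicalSpace X]
    [LocallyCompactSpace X] [SecondCountableTopology X] [T2Space X]
    [MeasurableSpace X] [BorelSpace X]
    (ν : Measure X) [ν.Regular] [NullSingletonClass ν]
    (μ : Measure (Config X)) [IsProbabilityMeasure μ]
    (r : X → Config X → ℝ) (hr0 : ∀ x γ, 0 ≤ r x γ)
    (hrm : Measurable fun p : X × Config X => r p.1 p.2)
    (hMecke : MeckeIdentity ν μ r)
    (a : X → X → ℝ) (ha0 : ∀ x y, 0 ≤ a x y) (hasym : ∀ x y, a x y = a y x)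
    (ham : Measurable fun p : X × X => a p.1 p.2)
    (habdd : ∃ M : ℝ, ∀ x y, a x y ≤ M)
    (haint : ⨆ x, ∫⁻ y, ENNReal.ofReal (a x y) ∂ν < ⊤)
    (j : X → ℝ) (hj0 : ∀ x, 0 ≤ j x) (hjm : Measurable j)
    (hrj : ∀ x γ, r x γ ≤ j x)
    (hjint : ∀ Λ : Set X, IsB0 Λ → ∫⁻ x in Λ, ENNReal.ofReal (j x) ∂ν < ⊤)
    (hjbdd : ∃ Λ₀ : Set X, IsB0 Λ₀ ∧ ∃ M : ℝ, ∀ x ∉ Λ₀, j x ≤ M)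
    (c : X → X → Config X → ℝ)
    (hc : ∀ x y γ, c x y γ =
      if 0 < r x γ ∧ 0 < r y γ then a x y * r y γ else 0) :
    ∀ Λ : Set X, IsB0 Λ →
      ∫⁻ γ, (∑' x : γ.1, ∫⁻ y,
          ENNReal.ofReal (c (x : X) y (γ.erase (x : X))) *
            (Λ.indicator (1 : X → ℝ≥0∞) (x : X) + Λ.indicator (1 : X → ℝ≥0∞) y) ∂ν) ^ 2
        ∂μ < ⊤ := by
  intro Λ hΛ
  obtain ⟨Ma, hMa⟩ := habdd
  obtain ⟨Λ₀, hΛ₀, Mj, hMj⟩ := hjbdd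
  set S := ⨆ x, ∫⁻ y, ENNReal.ofReal (a x y) ∂ν with hS
  set B := ENNReal.ofReal Ma * (∫⁻ x in Λ₀, ENNReal.ofReal (j x) ∂ν)
    + ENNReal.ofReal Mj * S with hBdef
  have hBlt : B < ⊤ :=
    ENNReal.add_lt_top.2 ⟨ENNReal.mul_lt_top ENNReal.ofReal_lt_top (hjint Λ₀ hΛ₀),
      ENNReal.mul_lt_top ENNReal.ofReal_lt_top haint⟩
  have hax : ∀ x : X, Measurable fun y => ENNReal.ofReal (a x y) :=
    fun x => (ham.comp (measurable_const.prodMk measurable_id)).ennreal_ofReal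
  -- the uniform bound on `∫ a(x,y) j(y) dν(y)`
  have hGx : ∀ x : X, ∫⁻ y, ENNReal.ofReal (a x y) * ENNReal.ofReal (j y) ∂ν ≤ B := by
    intro x
    rw [← lintegral_add_compl (fun y => ENNReal.ofReal (a x y) * ENNReal.ofReal (j y)) hΛ₀.1]
    refine add_le_add ?_ ?_
    · calc ∫⁻ y in Λ₀, ENNReal.ofReal (a x y) * ENNReal.ofReal (j y) ∂ν
          ≤ ∫⁻ y in Λ₀, ENNReal.ofReal Ma * ENNReal.ofReal (j y) ∂ν :=
            lintegral_mono fun y => mul_le_mul_left (ENNReal.ofReal_le_ofReal (hMa x y)) _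
        _ = ENNReal.ofReal Ma * ∫⁻ y in Λ₀, ENNReal.ofReal (j y) ∂ν :=
            lintegral_const_mul _ hjm.ennreal_ofReal
    · calc ∫⁻ y in Λ₀ᶜ, ENNReal.ofReal (a x y) * ENNReal.ofReal (j y) ∂ν
          ≤ ∫⁻ y in Λ₀ᶜ, ENNReal.ofReal (a x y) * ENNReal.ofReal Mj ∂ν :=
            setLIntegral_mono ((hax x).mul_const _) fun y hy =>
              mul_le_mul_right (ENNReal.ofReal_le_ofReal (hMj y hy)) _
        _ = (∫⁻ y in Λ₀ᶜ, ENNReal.ofReal (a x y) ∂ν) * ENNReal.ofReal Mj :=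
            lintegral_mul_const _ (hax x)
        _ ≤ (∫⁻ y, ENNReal.ofReal (a x y) ∂ν) * ENNReal.ofReal Mj :=
            mul_le_mul_left (lintegral_mono' Measure.restrict_le_self le_rfl) _
        _ ≤ S * ENNReal.ofReal Mj :=
            mul_le_mul_left (le_iSup (fun x => ∫⁻ y, ENNReal.ofReal (a x y) ∂ν) x) _
        _ = ENNReal.ofReal Mj * S := mul_comm _ _
  set GΛ : X → ℝ≥0∞ := fun x =>
    ∫⁻ y, ENNReal.ofReal (a x y) * ENNReal.ofReal (j y) * Λ.indicator (1 : X → ℝ≥0∞) y ∂ν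
    with hGΛdef
  have hFm : Measurable fun p : X × X =>
      ENNReal.ofReal (a p.1 p.2) * ENNReal.ofReal (j p.2) * Λ.indicator (1 : X → ℝ≥0∞) p.2 :=
    ((ham.ennreal_ofReal).mul ((hjm.comp measurable_snd).ennreal_ofReal)).mul
      ((measurable_one.indicator hΛ.1).comp measurable_snd)
  have hGΛm : Measurable GΛ := hFm.lintegral_prod_right'
  have hind_le_one : ∀ y : X, Λ.indicator (1 : X → ℝ≥0∞) y ≤ 1 := by
    intro y; by_cases hy : y ∈ Λ <;> simp [hy]
  have hGΛle : ∀ x, GΛ x ≤ B := by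
    intro x
    refine le_trans (le_trans (lintegral_mono fun y => ?_) le_rfl) (hGx x)
    calc ENNReal.ofReal (a x y) * ENNReal.ofReal (j y) * Λ.indicator (1 : X → ℝ≥0∞) y
        ≤ ENNReal.ofReal (a x y) * ENNReal.ofReal (j y) * 1 :=
          mul_le_mul_right (hind_le_one y) _
      _ = ENNReal.ofReal (a x y) * ENNReal.ofReal (j y) := mul_one _
  set φ : X → ℝ≥0∞ := fun x => B * Λ.indicator (1 : X → ℝ≥0∞) x + GΛ x with hφdef
  have hφ_apply : ∀ x, φ x = B * Λ.indicator (1 : X → ℝ≥0∞) x + GΛ x := fun _ => rfl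
  have hφm : Measurable φ := ((measurable_one.indicator hΛ.1).const_mul B).add hGΛm
  have hφle : ∀ x, φ x ≤ B + B := fun x =>
    add_le_add (le_trans (mul_le_mul_right (hind_le_one x) _) (le_of_eq (mul_one _))) (hGΛle x)
  -- pointwise bound on the inner integral
  have hfb : ∀ (x : X) (γ' : Config X),
      (∫⁻ y, ENNReal.ofReal (c x y γ') *
        (Λ.indicator (1 : X → ℝ≥0∞) x + Λ.indicator (1 : X → ℝ≥0∞) y) ∂ν) ≤ φ x := by
    intro x γ'
    have hA : Measurable fun y => ENNReal.ofReal (a x y) * ENNReal.ofReal (j y) :=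
      (hax x).mul hjm.ennreal_ofReal
    have step1 : ∀ y, ENNReal.ofReal (c x y γ')
        ≤ ENNReal.ofReal (a x y) * ENNReal.ofReal (j y) := by
      intro y
      rw [← ENNReal.ofReal_mul (ha0 x y)]
      apply ENNReal.ofReal_le_ofReal
      rw [hc]
      split_ifs with hcond
      · exact mul_le_mul_of_nonneg_left (hrj y γ') (ha0 x y)
      · exact mul_nonneg (ha0 x y) (hj0 y)
    calc ∫⁻ y, ENNReal.ofReal (c x y γ') *
          (Λ.indicator (1 : X → ℝ≥0∞) x + Λ.indicator (1 : X → ℝ≥0∞) y) ∂ν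
        ≤ ∫⁻ y, ENNReal.ofReal (a x y) * ENNReal.ofReal (j y) *
          (Λ.indicator (1 : X → ℝ≥0∞) x + Λ.indicator (1 : X → ℝ≥0∞) y) ∂ν :=
          lintegral_mono fun y => mul_le_mul_left (step1 y) _
      _ = (∫⁻ y, ENNReal.ofReal (a x y) * ENNReal.ofReal (j y) ∂ν) *
            Λ.indicator (1 : X → ℝ≥0∞) x + GΛ x := by
          simp_rw [mul_add]
          rw [lintegral_add_left (hA.mul_const _), lintegral_mul_const _ hA]
      _ ≤ B * Λ.indicator (1 : X → ℝ≥0∞) x + GΛ x :=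
          add_le_add_left (mul_le_mul_left (hGx x) _) _
      _ = φ x := (hφ_apply x).symm
  set T : Config X → ℝ≥0∞ := fun γ => ∑' z : γ.1, φ z with hTdef
  have hTm : Measurable T := measurable_linstat hφm
  have hb1 : ∀ γ : Config X,
      (∑' x : γ.1, ∫⁻ y, ENNReal.ofReal (c (x : X) y (γ.erase (x : X))) *
        (Λ.indicator (1 : X → ℝ≥0∞) (x : X) + Λ.indicator (1 : X → ℝ≥0∞) y) ∂ν) ≤ T γ :=
    fun γ => ENNReal.tsum_le_tsum fun x => hfb (x : X) (γ.erase (x : X))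
  set A1 := ∫⁻ x, ENNReal.ofReal (j x) * φ x ∂ν with hA1def
  have hjφm : Measurable fun x => ENNReal.ofReal (j x) * φ x := hjm.ennreal_ofReal.mul hφm
  have hA1lt : A1 < ⊤ := by
    have hsplit : A1 = (∫⁻ x, ENNReal.ofReal (j x) * (B * Λ.indicator (1 : X → ℝ≥0∞) x) ∂ν)
        + ∫⁻ x, ENNReal.ofReal (j x) * GΛ x ∂ν := by
      rw [hA1def]
      simp_rw [hφ_apply, mul_add]
      rw [lintegral_add_left (f := fun x => ENNReal.ofReal (j x) * (B * Λ.indicator (1 : X → ℝ≥0∞) x))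
        ((hjm.ennreal_ofReal).mul ((measurable_one.indicator hΛ.1).const_mul B))]
    rw [hsplit]
    refine ENNReal.add_lt_top.2 ⟨?_, ?_⟩
    · have heq : ∀ x, ENNReal.ofReal (j x) * (B * Λ.indicator (1 : X → ℝ≥0∞) x)
          = Λ.indicator (fun x => B * ENNReal.ofReal (j x)) x := by
        intro x; by_cases hx : x ∈ Λ <;>
          simp [hx, Set.indicator_of_mem, Set.indicator_of_notMem, mul_comm, mul_left_comm]
      simp_rw [heq]
      rw [lintegral_indicator hΛ.1, lintegral_const_mul _ hjm.ennreal_ofReal]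
      exact ENNReal.mul_lt_top hBlt (hjint Λ hΛ)
    · rw [← lintegral_add_compl (fun x => ENNReal.ofReal (j x) * GΛ x) hΛ₀.1]
      refine ENNReal.add_lt_top.2 ⟨?_, ?_⟩
      · calc ∫⁻ x in Λ₀, ENNReal.ofReal (j x) * GΛ x ∂ν
            ≤ ∫⁻ x in Λ₀, ENNReal.ofReal (j x) * B ∂ν :=
              lintegral_mono fun x => mul_le_mul_right (hGΛle x) _
          _ = (∫⁻ x in Λ₀, ENNReal.ofReal (j x) ∂ν) * B :=
              lintegral_mul_const _ hjm.ennreal_ofReal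
          _ < ⊤ := ENNReal.mul_lt_top (hjint Λ₀ hΛ₀) hBlt
      · have hGtot : ∫⁻ x, GΛ x ∂ν ≤ S * ∫⁻ y in Λ, ENNReal.ofReal (j y) ∂ν := by
          have hswap : ∫⁻ x, GΛ x ∂ν = ∫⁻ y, ∫⁻ x, ENNReal.ofReal (a x y) *
              ENNReal.ofReal (j y) * Λ.indicator (1 : X → ℝ≥0∞) y ∂ν ∂ν :=
            lintegral_lintegral_swap hFm.aemeasurable
          rw [hswap]
          have hinner : ∀ y : X, (∫⁻ x, ENNReal.ofReal (a x y) * ENNReal.ofReal (j y) *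
              Λ.indicator (1 : X → ℝ≥0∞) y ∂ν)
              ≤ S * (ENNReal.ofReal (j y) * Λ.indicator (1 : X → ℝ≥0∞) y) := by
            intro y
            have h1 : ∀ x : X, ENNReal.ofReal (a x y) * ENNReal.ofReal (j y) *
                Λ.indicator (1 : X → ℝ≥0∞) y
                = ENNReal.ofReal (a x y) *
                  (ENNReal.ofReal (j y) * Λ.indicator (1 : X → ℝ≥0∞) y) := fun x => mul_assoc _ _ _
            simp_rw [h1]
            have hay : Measurable fun x => ENNReal.ofReal (a x y) :=
              (ham.comp (measurable_id.prodMk measurable_const)).ennreal_ofReal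
            rw [lintegral_mul_const _ hay]
            refine mul_le_mul_left ?_ _
            have h2 : (∫⁻ x, ENNReal.ofReal (a x y) ∂ν) = ∫⁻ x, ENNReal.ofReal (a y x) ∂ν :=
              lintegral_congr fun x => by rw [hasym]
            rw [h2]
            exact le_iSup (fun z => ∫⁻ w, ENNReal.ofReal (a z w) ∂ν) y
          calc ∫⁻ y, ∫⁻ x, ENNReal.ofReal (a x y) * ENNReal.ofReal (j y) *
                Λ.indicator (1 : X → ℝ≥0∞) y ∂ν ∂ν
              ≤ ∫⁻ y, S * (ENNReal.ofReal (j y) * Λ.indicator (1 : X → ℝ≥0∞) y) ∂ν :=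
                lintegral_mono hinner
            _ = S * ∫⁻ y, ENNReal.ofReal (j y) * Λ.indicator (1 : X → ℝ≥0∞) y ∂ν :=
                lintegral_const_mul _ (hjm.ennreal_ofReal.mul (measurable_one.indicator hΛ.1))
            _ = S * ∫⁻ y in Λ, ENNReal.ofReal (j y) ∂ν := by
                congr 1
                have heq2 : ∀ y, ENNReal.ofReal (j y) * Λ.indicator (1 : X → ℝ≥0∞) y
                    = Λ.indicator (fun y => ENNReal.ofReal (j y)) y := by
                  intro y; by_cases hy : y ∈ Λ <;> simp [hy]
                simp_rw [heq2]
                exact lintegral_indicator hΛ.1 _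
        calc ∫⁻ x in Λ₀ᶜ, ENNReal.ofReal (j x) * GΛ x ∂ν
            ≤ ∫⁻ x in Λ₀ᶜ, ENNReal.ofReal Mj * GΛ x ∂ν :=
              setLIntegral_mono (hGΛm.const_mul _) fun x hx =>
                mul_le_mul_left (ENNReal.ofReal_le_ofReal (hMj x hx)) _
          _ = ENNReal.ofReal Mj * ∫⁻ x in Λ₀ᶜ, GΛ x ∂ν := lintegral_const_mul _ hGΛm
          _ ≤ ENNReal.ofReal Mj * ∫⁻ x, GΛ x ∂ν :=
              mul_le_mul_right (lintegral_mono' Measure.restrict_le_self le_rfl) _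
          _ ≤ ENNReal.ofReal Mj * (S * ∫⁻ y in Λ, ENNReal.ofReal (j y) ∂ν) :=
              mul_le_mul_right hGtot _
          _ < ⊤ := ENNReal.mul_lt_top ENNReal.ofReal_lt_top
              (ENNReal.mul_lt_top haint (hjint Λ hΛ))
  set A2 := ∫⁻ x, ENNReal.ofReal (j x) * (φ x * φ x) ∂ν with hA2def
  have hA2lt : A2 < ⊤ := by
    have hstep : A2 ≤ ∫⁻ x, (B + B) * (ENNReal.ofReal (j x) * φ x) ∂ν := by
      refine lintegral_mono fun x => ?_
      calc ENNReal.ofReal (j x) * (φ x * φ x)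
          ≤ ENNReal.ofReal (j x) * ((B + B) * φ x) :=
            mul_le_mul_right (mul_le_mul_left (hφle x) _) _
        _ = (B + B) * (ENNReal.ofReal (j x) * φ x) := by ring
    refine lt_of_le_of_lt hstep ?_
    rw [lintegral_const_mul _ hjφm]
    exact ENNReal.mul_lt_top (ENNReal.add_lt_top.2 ⟨hBlt, hBlt⟩) hA1lt
  -- first Mecke application
  have hM1 := hMecke (fun x _ => φ x) (hφm.comp measurable_fst)
  have hTint : ∫⁻ γ, T γ ∂μ ≤ A1 := by
    calc ∫⁻ γ, T γ ∂μ = ∫⁻ γ, ∫⁻ x, ENNReal.ofReal (r x γ) * φ x ∂ν ∂μ := hM1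
      _ ≤ ∫⁻ γ, ∫⁻ x, ENNReal.ofReal (j x) * φ x ∂ν ∂μ :=
          lintegral_mono fun γ => lintegral_mono fun x =>
            mul_le_mul_left (ENNReal.ofReal_le_ofReal (hrj x γ)) _
      _ = A1 := by rw [lintegral_const, measure_univ, mul_one]
  -- second Mecke application
  have hsq : ∀ γ : Config X, T γ ^ 2 = ∑' x : γ.1, φ (x : X) * T γ := by
    intro γ; rw [ENNReal.tsum_mul_right, sq]
  have hTins : ∀ (x : X) (γ : Config X), T ((γ.ins x)) ≤ φ x + T γ := by
    intro x γ
    have h1 : T (γ.ins x) = ∑' z : X, (insert x γ.1).indicator φ z := tsum_subtype _ _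
    have h2 : T γ = ∑' z : X, γ.1.indicator φ z := tsum_subtype _ _
    rw [h1, h2]
    have hle : ∀ z : X, (insert x γ.1).indicator φ z
        ≤ ({x} : Set X).indicator φ z + γ.1.indicator φ z := by
      intro z
      by_cases hz : z ∈ insert x γ.1
      · rw [Set.indicator_of_mem hz]
        rcases hz with rfl | hz
        · rw [Set.indicator_of_mem (Set.mem_singleton z)]
          exact le_self_add
        · rw [Set.indicator_of_mem hz]
          exact le_add_self
      · rw [Set.indicator_of_notMem hz]
        exact zero_le
    calc ∑' z : X, (insert x γ.1).indicator φ z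
        ≤ ∑' z : X, (({x} : Set X).indicator φ z + γ.1.indicator φ z) :=
          ENNReal.tsum_le_tsum hle
      _ = (∑' z : X, ({x} : Set X).indicator φ z) + ∑' z : X, γ.1.indicator φ z :=
          ENNReal.tsum_add
      _ = φ x + ∑' z : X, γ.1.indicator φ z := by
          congr 1
          rw [tsum_eq_single x (fun b hb =>
            Set.indicator_of_notMem (fun h => hb (Set.mem_singleton_iff.1 h)) _)]
          exact Set.indicator_of_mem (Set.mem_singleton x) _
  have hM2 := hMecke (fun x γ => φ x * T γ)
    ((hφm.comp measurable_fst).mul (hTm.comp measurable_snd))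
  have hT2 : ∫⁻ γ, T γ ^ 2 ∂μ ≤ A2 + A1 * A1 := by
    calc ∫⁻ γ, T γ ^ 2 ∂μ
        = ∫⁻ γ, ∫⁻ x, ENNReal.ofReal (r x γ) * (φ x * T (γ.ins x)) ∂ν ∂μ := by
          simp_rw [hsq]; exact hM2
      _ ≤ ∫⁻ γ, ∫⁻ x, ENNReal.ofReal (j x) * (φ x * (φ x + T γ)) ∂ν ∂μ :=
          lintegral_mono fun γ => lintegral_mono fun x =>
            mul_le_mul' (ENNReal.ofReal_le_ofReal (hrj x γ)) (mul_le_mul_right (hTins x γ) _)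
      _ = ∫⁻ γ, (A2 + A1 * T γ) ∂μ := by
          refine lintegral_congr fun γ => ?_
          have hdist : ∀ x, ENNReal.ofReal (j x) * (φ x * (φ x + T γ))
              = ENNReal.ofReal (j x) * (φ x * φ x) + (ENNReal.ofReal (j x) * φ x) * T γ := by
            intro x; ring
          simp_rw [hdist]
          rw [lintegral_add_left (f := fun x => ENNReal.ofReal (j x) * (φ x * φ x)) (hjm.ennreal_ofReal.mul (hφm.mul hφm)),
            lintegral_mul_const _ hjφm]
      _ = A2 + A1 * ∫⁻ γ, T γ ∂μ := by
          rw [lintegral_add_left measurable_const, lintegral_const, measure_univ, mul_one,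
            lintegral_const_mul _ hTm]
      _ ≤ A2 + A1 * A1 := add_le_add_right (mul_le_mul_right hTint _) _
  refine lt_of_le_of_lt ?_ (lt_of_le_of_lt hT2
    (ENNReal.add_lt_top.2 ⟨hA2lt, ENNReal.mul_lt_top hA1lt hA1lt⟩))
  exact lintegral_mono fun γ => le_trans (pow_le_pow_left' (hb1 γ) 2) le_rfl


end
end
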